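/- (Uniqueness of the PBDW perfect-data estimate.) Assume β_{N,M} > 0. If u₁ = z₁ + η₁ and u₂ = z₂ + η₂ with z₁, z₂ ∈ Z_N and η₁, η₂ ∈ U_M ∩ Z_N^⊥ satisfy Π u₁ = Π u₂, then u₁ = u₂. In particular, for any u_true ∈ U there is at most one PBDW estimate with perfect data. -/

import Mathlib

open Submodule

/-- **Uniqueness of the PBDW perfect-data estimate.**
Assume the stability constant `β` is positive.  If `u₁ = z₁ + η₁` and `u₂ = z₂ + η₂`
with `z₁, z₂ ∈ ZN`, `η₁, η₂ ∈ UM ⊓ ZNᗮ` have the same orthogonal projection onto the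
update space `UM`, then `u₁ = u₂`.  In particular, for any `utrue` there is at most
one PBDW estimate with perfect data. -/
theorem pbdw_perfect_data_estimate_unique
    {U : Type*} [NormedAddCommGroup U] [InnerProductSpace ℝ U] [CompleteSpace U]
    (ZN UM : Submodule ℝ U) [FiniteDimensional ℝ ZN] [FiniteDimensional ℝ UM]
    (β : ℝ) (hβ : 0 < β)
    (hstab : ∀ z ∈ ZN, β * ‖z‖ ≤ ‖(orthogonalProjection UM z : U)‖)
    (u₁ u₂ z₁ z₂ η₁ η₂ : U)
    (hz₁ : z₁ ∈ ZN) (hz₂ : z₂ ∈ ZN)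
    (hη₁ : η₁ ∈ UM ⊓ ZNᗮ) (hη₂ : η₂ ∈ UM ⊓ ZNᗮ)
    (hu₁ : u₁ = z₁ + η₁) (hu₂ : u₂ = z₂ + η₂)
    (hproj : orthogonalProjection UM u₁ = orthogonalProjection UM u₂) :
    u₁ = u₂ := by
  obtain ⟨hη₁M, hη₁Z⟩ := hη₁
  obtain ⟨hη₂M, hη₂Z⟩ := hη₂
  set z := z₁ - z₂ with hz
  set η := η₁ - η₂ with hηdef
  have hzZ : z ∈ ZN := ZN.sub_mem hz₁ hz₂
  have hηM : η ∈ UM := UM.sub_mem hη₁M hη₂M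
  have hηZ : η ∈ ZNᗮ := ZNᗮ.sub_mem hη₁Z hη₂Z
  have hP : orthogonalProjection UM (z + η) = 0 := by
    have : z + η = u₁ - u₂ := by rw [hu₁, hu₂, hz, hηdef]; abel
    rw [this, map_sub, hproj, sub_self]
  have hPη : (orthogonalProjection UM η : U) = η :=
    congrArg _ (orthogonalProjection_mem_subspace_eq_self ⟨η, hηM⟩)
  have hPz : (orthogonalProjection UM z : U) = -η := by
    have := congrArg (Subtype.val) hP
    rw [map_add] at this
    simpa [hPη, add_eq_zero_iff_eq_neg] using this
  have hinner : (inner ℝ ((orthogonalProjection UM z : U)) η : ℝ) = 0 := by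
    rw [← starProjection_apply, inner_starProjection_left_eq_right UM z η, starProjection_apply, hPη]
    exact hηZ z hzZ
  have hηzero : η = 0 := by
    rw [hPz] at hinner
    simpa [inner_neg_left, real_inner_self_eq_norm_sq, neg_eq_zero,
      pow_eq_zero_iff] using hinner
  have hzzero : z = 0 := by
    have := hstab z hzZ
    rw [hPz, hηzero, norm_neg, norm_zero] at this
    have h0 : ‖z‖ = 0 := by nlinarith [norm_nonneg z]
    exact norm_eq_zero.mp h0
  have : u₁ - u₂ = 0 := by
    rw [hu₁, hu₂]
    have : z + η = 0 := by rw [hηzero, hzzero, add_zero]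
    calc z₁ + η₁ - (z₂ + η₂) = z + η := by rw [hz, hηdef]; abel
    _ = 0 := this
  exact sub_eq_zero.mp this
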